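/- Let R_j = Y_j - (1/n)∑_{i=1}^n Y_i for j = 1,…,n, and define W_j = R_{j+1} - (1/(√n + 1)) R_1 for j = 1,…,n-1. Then ∑_{j=1}^{n-1} W_j² = ∑_{j=1}^n R_j² (as an algebraic identity for any real Y_1,…,Y_n). -/

import Mathlib

theorem stmt_0 (n : ℕ) (hn : 2 ≤ n) (Y R W : ℕ → ℝ)
    (hR : ∀ j, R j = Y j - (∑ i ∈ Finset.range n, Y i) / n)
    (hW : ∀ j, W j = R (j + 1) - (1 / (Real.sqrt n + 1)) * R 0) :
    ∑ j ∈ Finset.range (n - 1), (W j) ^ 2 = ∑ j ∈ Finset.range n, (R j) ^ 2 := by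
  have hn0 : (0:ℝ) < (n:ℝ) := by
    have : 0 < n := lt_of_lt_of_le (by norm_num) hn
    exact_mod_cast this
  set c : ℝ := 1 / (Real.sqrt n + 1) with hc
  have hs : Real.sqrt n * Real.sqrt n = n := Real.mul_self_sqrt hn0.le
  have hspos : 0 < Real.sqrt n := Real.sqrt_pos.mpr hn0
  have hne : Real.sqrt n + 1 ≠ 0 := by positivity
  -- sum of residuals is zero
  have hsum : ∑ j ∈ Finset.range n, R j = 0 := by
    simp only [hR, Finset.sum_sub_distrib, Finset.sum_const, Finset.card_range, nsmul_eq_mul]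
    field_simp
    ring
  have hn1 : n - 1 + 1 = n := Nat.succ_pred_eq_of_pos (lt_of_lt_of_le (by norm_num) hn)
  -- shifted sums
  have hA : ∑ j ∈ Finset.range (n - 1), R (j + 1) = - R 0 := by
    have := Finset.sum_range_succ' R (n - 1)
    rw [hn1] at this
    linarith [this, hsum]
  have hB : ∑ j ∈ Finset.range (n - 1), (R (j + 1)) ^ 2
      = (∑ j ∈ Finset.range n, (R j) ^ 2) - (R 0) ^ 2 := by
    have := Finset.sum_range_succ' (fun j => (R j) ^ 2) (n - 1)
    rw [hn1] at this
    linarith [this]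
  have hcast : ((n - 1 : ℕ) : ℝ) = (n : ℝ) - 1 := by
    have : (1:ℕ) ≤ n := le_trans (by norm_num) hn
    push_cast [Nat.cast_sub this]
    ring
  have key : 2 * c + ((n:ℝ) - 1) * c ^ 2 = 1 := by
    rw [hc]
    field_simp
    nlinarith [hs]
  calc ∑ j ∈ Finset.range (n - 1), (W j) ^ 2
      = ∑ j ∈ Finset.range (n - 1),
        ((R (j+1))^2 - 2 * c * R 0 * R (j+1) + c^2 * (R 0)^2) := by
        refine Finset.sum_congr rfl fun j _ => ?_
        rw [hW j]; ring
    _ = (∑ j ∈ Finset.range (n - 1), (R (j + 1)) ^ 2)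
        - 2 * c * R 0 * (∑ j ∈ Finset.range (n - 1), R (j + 1))
        + ((n - 1 : ℕ) : ℝ) * (c^2 * (R 0)^2) := by
        rw [Finset.sum_add_distrib, Finset.sum_sub_distrib, ← Finset.mul_sum,
          Finset.sum_const, Finset.card_range, nsmul_eq_mul]
    _ = ∑ j ∈ Finset.range n, (R j) ^ 2 := by
        rw [hA, hB, hcast]
        nlinarith [key]
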